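/- There exists a finite simple graph G and an edge (a,b) of G with E_{S_{a,b}↔{a,b}} ≠ ∅ such that φ_G((a,b)) < min{φ_G(e') : e' ∈ E_{S_{a,b}↔{a,b}}}; that is, the minimum truss number of the edges joining common neighbors of a and b to a or b is not a lower bound for the truss number of (a,b). -/

import Mathlib

open SimpleGraph

variable {V : Type*}

/-- `H` is a `k`-truss of `G`: a connected subgraph with at least one edge in which
every edge lies in at least `k - 2` triangles of `H` (i.e. the endpoints of every edge
have at least `k - 2` common neighbors in `H`). -/
def IsTruss (G : SimpleGraph V) (k : ℕ) (H : G.Subgraph) : Prop :=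
  H.Connected ∧ H.edgeSet.Nonempty ∧
    ∀ a b : V, H.Adj a b → k - 2 ≤ {c : V | H.Adj a c ∧ H.Adj b c}.ncard

/-- The truss number `φ_G(e)` of an edge `e`: the largest `k` such that `e` lies in some
`k`-truss of `G`. -/
noncomputable def trussNumber (G : SimpleGraph V) (e : Sym2 V) : ℕ :=
  sSup {k : ℕ | ∃ H : G.Subgraph, IsTruss G k H ∧ e ∈ H.edgeSet}

/-- The support of the edge `(a, b)` in a subgraph `H`: the number of triangles of `H`
containing it, i.e. the number of common neighbors of `a` and `b` in `H`. -/
noncomputable def suppIn {G : SimpleGraph V} (H : G.Subgraph) (a b : V) : ℕ :=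
  {c : V | H.Adj a c ∧ H.Adj b c}.ncard

/-- The support of the edge `(a, b)` in `G`. -/
noncomputable def suppG (G : SimpleGraph V) (a b : V) : ℕ :=
  {c : V | G.Adj a c ∧ G.Adj b c}.ncard

/-- `S_{a,b}`: the common neighbors of `a` and `b` in `G`. -/
def commonNbrs (G : SimpleGraph V) (a b : V) : Set V :=
  {c : V | G.Adj a c ∧ G.Adj b c}

/-- `E_{S_{a,b} ↔ {a,b}}`: the edges of `G` joining a common neighbor of `a` and `b`
to `a` or to `b`. -/
def sideEdges (G : SimpleGraph V) (a b : V) : Set (Sym2 V) :=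
  {e | ∃ c, G.Adj a c ∧ G.Adj b c ∧ (e = s(a, c) ∨ e = s(b, c))}

/-- `k_min((a,b))`: minimum truss number among the edges of `E_{S_{a,b} ↔ {a,b}}`. -/
noncomputable def kmin (G : SimpleGraph V) (a b : V) : ℕ :=
  sInf (trussNumber G '' sideEdges G a b)

/-- `k_max((a,b))`: maximum truss number among the edges of `E_{S_{a,b} ↔ {a,b}}`. -/
noncomputable def kmax (G : SimpleGraph V) (a b : V) : ℕ :=
  sSup (trussNumber G '' sideEdges G a b)

/-- `G + (a,b)`: the graph obtained from `G` by inserting the edge `(a, b)`. -/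
def insertEdge (G : SimpleGraph V) (a b : V) : SimpleGraph V :=
  G ⊔ fromEdgeSet {s(a, b)}


def edgeL : List (ℕ × ℕ) :=
  [(0,2),(0,3),(0,4),(2,3),(2,4),(3,4),(1,2),(1,5),(1,6),(2,5),(2,6),(5,6),(0,1)]

def G7 : SimpleGraph (Fin 7) where
  Adj i j := (i.val, j.val) ∈ edgeL ∨ (j.val, i.val) ∈ edgeL
  symm := ⟨fun _ _ h => h.symm⟩
  loopless := by
    have : ∀ i : Fin 7, ¬((i.val, i.val) ∈ edgeL ∨ (i.val, i.val) ∈ edgeL) := by decide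
    exact ⟨fun i => this i⟩

instance : DecidableRel G7.Adj := fun i j => by unfold G7; infer_instance

def cSub (s : Finset (Fin 7))
    (h : ∀ u v : Fin 7, u ≠ v → u ∈ s → v ∈ s → G7.Adj u v) : G7.Subgraph where
  verts := ↑s
  Adj u v := u ≠ v ∧ u ∈ s ∧ v ∈ s
  adj_sub := fun ⟨hne, hu, hv⟩ => h _ _ hne hu hv
  edge_vert := fun ⟨_, hu, _⟩ => hu
  symm := ⟨fun _ _ ⟨hne, hu, hv⟩ => ⟨hne.symm, hv, hu⟩⟩

lemma cSub_truss (s : Finset (Fin 7))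
    (h : ∀ u v : Fin 7, u ≠ v → u ∈ s → v ∈ s → G7.Adj u v)
    (hedge : ∃ u v : Fin 7, u ∈ s ∧ v ∈ s ∧ u ≠ v)
    (hcard : ∀ a b : Fin 7, a ∈ s → b ∈ s → a ≠ b →
      2 ≤ (Finset.univ.filter fun c =>
        (a ≠ c ∧ a ∈ s ∧ c ∈ s) ∧ (b ≠ c ∧ b ∈ s ∧ c ∈ s)).card) :
    IsTruss G7 4 (cSub s h) := by
  obtain ⟨u0, v0, hu0, hv0, huv0⟩ := hedge
  refine ⟨?_, ⟨s(u0, v0), ?_⟩, ?_⟩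
  · rw [SimpleGraph.Subgraph.connected_iff]
    refine ⟨Subgraph.preconnected_iff.mpr ?_, ⟨u0, hu0⟩⟩
    rintro ⟨x, hx⟩ ⟨y, hy⟩
    by_cases hxy : x = y
    · subst hxy; exact Reachable.refl _
    · exact Adj.reachable (by exact ⟨hxy, hx, hy⟩)
  · exact ⟨huv0, hu0, hv0⟩
  · intro a b hab
    obtain ⟨hne, ha, hb⟩ := hab
    have hset : {c : Fin 7 | (cSub s h).Adj a c ∧ (cSub s h).Adj b c} =
        ↑(Finset.univ.filter fun c =>
          (a ≠ c ∧ a ∈ s ∧ c ∈ s) ∧ (b ≠ c ∧ b ∈ s ∧ c ∈ s)) := by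
      ext c; simp [cSub]
    rw [hset, Set.ncard_coe_finset]
    exact hcard a b ha hb hne

lemma truss_bdd (e : Sym2 V) [Fintype V] (G : SimpleGraph V) :
    BddAbove {k : ℕ | ∃ H : G.Subgraph, IsTruss G k H ∧ e ∈ H.edgeSet} := by
  refine ⟨Fintype.card V + 2, ?_⟩
  rintro k ⟨H, ⟨_, _, htri⟩, he⟩
  induction e with
  | h a b =>
    have hadj : H.Adj a b := he
    have := htri a b hadj
    have hle : {c : V | H.Adj a c ∧ H.Adj b c}.ncard ≤ Fintype.card V := by
      calc {c : V | H.Adj a c ∧ H.Adj b c}.ncard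
          ≤ (Set.univ : Set V).ncard :=
            Set.ncard_le_ncard (Set.subset_univ _) Set.finite_univ
        _ = Fintype.card V := by rw [Set.ncard_univ, Nat.card_eq_fintype_card]
    omega

theorem stmt11 : ∃ (n : ℕ) (G : SimpleGraph (Fin n)) (a b : Fin n),
    G.Adj a b ∧ (sideEdges G a b).Nonempty ∧
    trussNumber G s(a, b) < kmin G a b := by
  refine ⟨7, G7, 0, 1, by decide, ⟨s(0, 2), ⟨2, by decide, by decide, Or.inl rfl⟩⟩, ?_⟩
  have hcn : ∀ c : Fin 7, G7.Adj 0 c → G7.Adj 1 c → c = 2 := by decide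
  -- truss number of s(0,1) ≤ 3
  have h01 : trussNumber G7 s(0, 1) ≤ 3 := by
    apply csSup_le'
    rintro k ⟨H, ⟨_, _, htri⟩, he⟩
    have hadj : H.Adj 0 1 := he
    have h1 := htri 0 1 hadj
    have hsub : {c : Fin 7 | H.Adj 0 c ∧ H.Adj 1 c} ⊆ {2} := by
      rintro c ⟨hc0, hc1⟩
      exact hcn c (H.adj_sub hc0) (H.adj_sub hc1)
    have h2 : {c : Fin 7 | H.Adj 0 c ∧ H.Adj 1 c}.ncard ≤ 1 := by
      calc {c : Fin 7 | H.Adj 0 c ∧ H.Adj 1 c}.ncard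
          ≤ ({2} : Set (Fin 7)).ncard :=
            Set.ncard_le_ncard hsub (Set.finite_singleton _)
        _ = 1 := Set.ncard_singleton _
    omega
  -- side edges have truss number ≥ 4
  have h02 : (4 : ℕ) ≤ trussNumber G7 s(0, 2) := by
    apply le_csSup (truss_bdd _ _)
    exact ⟨cSub {0, 2, 3, 4} (by decide),
      cSub_truss _ _ ⟨0, 2, by decide, by decide, by decide⟩ (by decide),
      ⟨by decide, by decide, by decide⟩⟩
  have h12 : (4 : ℕ) ≤ trussNumber G7 s(1, 2) := by
    apply le_csSup (truss_bdd _ _)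
    exact ⟨cSub {1, 2, 5, 6} (by decide),
      cSub_truss _ _ ⟨1, 2, by decide, by decide, by decide⟩ (by decide),
      ⟨by decide, by decide, by decide⟩⟩
  have hkmin : (4 : ℕ) ≤ kmin G7 0 1 := by
    refine le_csInf ⟨trussNumber G7 s(0, 2), ⟨s(0, 2), ⟨2, by decide, by decide, Or.inl rfl⟩, rfl⟩⟩ ?_
    rintro b ⟨e, ⟨c, hc0, hc1, hor⟩, rfl⟩
    have hc2 : c = 2 := hcn c hc0 hc1
    subst hc2
    rcases hor with h | h <;> subst h
    · exact h02
    · exact h12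
  omega
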